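/- For a T-periodic essentially bounded scalar function a and a locally square-integrable signal x, the phasors of the product satisfy F(ax)(t) = T(a) F(x)(t); i.e., the k-th phasor of a·x equals Σ_m a_{k−m} X_m(t), where (a_k) are the Fourier coefficients of a and X = F(x). -/

import Mathlib

open MeasureTheory

/-- The `k`-th Fourier coefficient of a `T`-periodic function. -/
noncomputable def fourierCoef (T : ℝ) (f : ℝ → ℂ) (k : ℤ) : ℂ :=
  (1 / (T : ℂ)) * ∫ τ in (0:ℝ)..T,
    f τ * Complex.exp (-(Complex.I * (k : ℂ) * ((2 * Real.pi / T : ℝ) : ℂ) * (τ : ℂ)))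

/-- Sliding Fourier (phasor) coefficient. -/
noncomputable def phasor (T : ℝ) (x : ℝ → ℂ) (k : ℤ) (t : ℝ) : ℂ :=
  (1 / (T : ℂ)) * ∫ τ in (t - T)..t,
    x τ * Complex.exp (-(Complex.I * (k : ℂ) * ((2 * Real.pi / T : ℝ) : ℂ) * (τ : ℂ)))

open Complex in
/-- The exponential appearing in `phasor` is the conjugate Fourier monomial. -/
lemma fourier_neg_coe_eq (T : ℝ) (hT : 0 < T) (m : ℤ) (τ : ℝ) :
    (fourier (-m) (τ : AddCircle T) : ℂ)
      = Complex.exp (-(Complex.I * (m : ℂ) * ((2 * Real.pi / T : ℝ) : ℂ) * (τ : ℂ))) := by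
  rw [fourier_coe_apply]
  congr 1
  have hT' : (T : ℂ) ≠ 0 := Complex.ofReal_ne_zero.mpr hT.ne'
  push_cast
  ring

/-- `F(ax) = T(a) F(x)`: the `k`-th phasor of the product `a·x` equals
`Σ_m a_{k−m} X_m(t)`. -/
theorem phasor_mul_eq_laurent_apply
    (T : ℝ) (hT : 0 < T) (a : ℝ → ℂ) (x : ℝ → ℂ)
    (ha_per : ∀ t, a (t + T) = a t)
    (ha_meas : Measurable a)
    (ha_bdd : ∃ C, ∀ t, ‖a t‖ ≤ C)
    (hx : ∀ A B : ℝ, MemLp x 2 (volume.restrict (Set.Ioc A B))) :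
    ∀ (k : ℤ) (t : ℝ),
      phasor T (fun τ => a τ * x τ) k t
        = ∑' m : ℤ, fourierCoef T a (k - m) * phasor T x m t := by
  intro k t
  haveI : Fact (0 < T) := ⟨hT⟩
  obtain ⟨C, hC⟩ := ha_bdd
  have hTC : (T : ℂ) ≠ 0 := Complex.ofReal_ne_zero.mpr hT.ne'
  have hper : Function.Periodic a T := ha_per
  set μI : Measure ℝ := volume.restrict (Set.Ioc (t - T) t) with hμI
  have hxI : MemLp x 2 μI := hx (t - T) t
  set x' : ℝ → ℂ := hxI.1.mk x with hx'def
  have hx'sm : StronglyMeasurable x' := hxI.1.stronglyMeasurable_mk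
  have hxx' : x =ᵐ[μI] x' := hxI.1.ae_eq_mk
  -- the lifts to the circle
  set A : AddCircle T → ℂ := AddCircle.liftIoc T 0 a with hAdef
  set g : AddCircle T → ℂ := AddCircle.liftIoc T (t - T) x' with hgdef
  -- A agrees with a everywhere
  have hA_mk : ∀ τ : ℝ, A (τ : AddCircle T) = a τ := by
    intro τ
    set s := AddCircle.equivIoc T 0 (τ : AddCircle T) with hs
    have h1 : ((s : ℝ) : AddCircle T) = (τ : AddCircle T) := by
      conv_rhs => rw [← (AddCircle.equivIoc T 0).symm_apply_apply (τ : AddCircle T)]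
      rfl
    have h2 : -(s : ℝ) + τ ∈ AddSubgroup.zmultiples T := by
      exact (QuotientAddGroup.eq (s := AddSubgroup.zmultiples T)).mp h1
    obtain ⟨n, hn⟩ := AddSubgroup.mem_zmultiples_iff.mp h2
    have hτ : τ = (s : ℝ) + (n : ℝ) * T := by
      have : (n : ℝ) * T = -(s : ℝ) + τ := by rw [← hn]; push_cast [zsmul_eq_mul]; ring
      linarith [this]
    have : a τ = a (s : ℝ) := by rw [hτ]; exact (hper.int_mul n) (s : ℝ)
    rw [this]
    rfl
  -- g agrees with x' on the window
  have hg_mk : ∀ τ ∈ Set.Ioc (t - T) t, g (τ : AddCircle T) = x' τ := by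
    intro τ hτ
    have hτ' : τ ∈ Set.Ioc (t - T) ((t - T) + T) := by
      rwa [sub_add_cancel]
    exact AddCircle.liftIoc_coe_apply hτ'
  -- generic transfer of (1/T)·∫ over a period window to a haar integral on the circle
  have key : ∀ (c : ℝ) (f : ℝ → ℂ) (F : AddCircle T → ℂ),
      (∀ τ ∈ Set.Ioc c (c + T), F (τ : AddCircle T) = f τ) →
      (1 / (T : ℂ)) * ∫ τ in Set.Ioc c (c + T), f τ
        = ∫ z, F z ∂AddCircle.haarAddCircle := by
    intro c f F hFf
    have h1 : ∫ τ in Set.Ioc c (c + T), f τ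
        = ∫ τ in Set.Ioc c (c + T), F (τ : AddCircle T) :=
      setIntegral_congr_fun measurableSet_Ioc fun τ hτ => (hFf τ hτ).symm
    rw [h1, AddCircle.integral_preimage T c F, AddCircle.volume_eq_smul_haarAddCircle,
      integral_smul_measure, ENNReal.toReal_ofReal hT.le, Complex.real_smul,
      ← mul_assoc, one_div, inv_mul_cancel₀ hTC, one_mul]
  -- phasors as Fourier coefficients on the circle
  have hphasor : ∀ (m : ℤ) (y : ℝ → ℂ) (gl : AddCircle T → ℂ),
      (∀ τ ∈ Set.Ioc (t - T) t, gl (τ : AddCircle T) = y τ) →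
      phasor T y m t = fourierCoeff gl m := by
    intro m y gl hgl
    rw [phasor, intervalIntegral.integral_of_le (by linarith : t - T ≤ t)]
    have hk := key (t - T)
      (fun τ => y τ * Complex.exp (-(Complex.I * (m : ℂ) * ((2 * Real.pi / T : ℝ) : ℂ) * (τ : ℂ))))
      (fun z => fourier (-m) z • gl z) ?_
    · rw [sub_add_cancel] at hk
      exact hk
    · intro τ hτ
      have hτ' : τ ∈ Set.Ioc (t - T) t := by rwa [sub_add_cancel] at hτ
      rw [smul_eq_mul, hgl τ hτ', fourier_neg_coe_eq T hT, mul_comm]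
  have hacoef : ∀ n : ℤ, fourierCoef T a n = fourierCoeff A n := by
    intro n
    rw [fourierCoef, intervalIntegral.integral_of_le hT.le]
    have hk := key 0
      (fun τ => a τ * Complex.exp (-(Complex.I * (n : ℂ) * ((2 * Real.pi / T : ℝ) : ℂ) * (τ : ℂ))))
      (fun z => fourier (-n) z • A z) ?_
    · rw [zero_add] at hk
      exact hk
    · intro τ _
      rw [smul_eq_mul, hA_mk τ, fourier_neg_coe_eq T hT, mul_comm]
  -- phasor only depends on the a.e. class on the window
  have hpcongr : ∀ (m : ℤ) (y y' : ℝ → ℂ), y =ᵐ[μI] y' → phasor T y m t = phasor T y' m t := by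
    intro m y y' h
    rw [phasor, phasor, intervalIntegral.integral_of_le (by linarith : t - T ≤ t),
      intervalIntegral.integral_of_le (by linarith : t - T ≤ t)]
    congr 1
    exact integral_congr_ae (h.mono fun τ hτ => by dsimp only; rw [hτ])
  -- measurability and MemLp facts
  have hequiv_meas : ∀ c : ℝ, Measurable fun z : AddCircle T =>
      ((AddCircle.measurableEquivIoc T c z : Set.Ioc c (c + T)) : ℝ) :=
    fun c => measurable_subtype_coe.comp (AddCircle.measurableEquivIoc T c).measurable
  have hA_measC : Measurable A := ha_meas.comp (hequiv_meas 0)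
  have hA_bd : ∀ z, ‖A z‖ ≤ C := fun z => hC _
  have hA_L2 : MemLp A 2 (AddCircle.haarAddCircle) :=
    MemLp.of_bound hA_measC.aestronglyMeasurable C (Filter.Eventually.of_forall hA_bd)
  set hfun : AddCircle T → ℂ := fun z => (starRingEnd ℂ) (A z) * fourier k z with hfundef
  have hfour1 : ∀ (n : ℤ) (z : AddCircle T), ‖(fourier n z : ℂ)‖ = 1 := by
    intro n z
    rw [fourier_apply]
    exact Circle.norm_coe _
  have hh_meas : Measurable hfun := by
    exact (continuous_star.measurable.comp hA_measC).mul (map_continuous (fourier k)).measurable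
  have hh_L2 : MemLp hfun 2 (AddCircle.haarAddCircle) := by
    refine MemLp.of_bound hh_meas.aestronglyMeasurable C (Filter.Eventually.of_forall fun z => ?_)
    have : ‖hfun z‖ = ‖A z‖ := by
      rw [hfundef]
      simp only [norm_mul, RCLike.norm_conj, hfour1 k z, mul_one]
    rw [this]; exact hA_bd z
  have hg_sm : StronglyMeasurable g := hx'sm.comp_measurable (hequiv_meas (t - T))
  have hmp := AddCircle.measurePreserving_mk T (t - T)
  rw [sub_add_cancel] at hmp
  have hgmk_ae : (g ∘ fun (τ : ℝ) => (τ : AddCircle T)) =ᵐ[μI] x := by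
    have h1 : ∀ᵐ τ ∂μI, τ ∈ Set.Ioc (t - T) t := ae_restrict_mem measurableSet_Ioc
    filter_upwards [h1, hxx'] with τ hm hxe
    exact (hg_mk τ hm).trans hxe.symm
  have hg_vol : MemLp g 2 (volume : Measure (AddCircle T)) := by
    refine ⟨hg_sm.aestronglyMeasurable, ?_⟩
    rw [← eLpNorm_comp_measurePreserving hg_sm.aestronglyMeasurable hmp,
      eLpNorm_congr_ae hgmk_ae]
    exact hxI.2
  have hg_L2 : MemLp g 2 (AddCircle.haarAddCircle) := by
    have hne : ENNReal.ofReal T ≠ 0 := ne_of_gt (ENNReal.ofReal_pos.mpr hT)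
    have hhaa : (AddCircle.haarAddCircle : Measure (AddCircle T))
        = (ENNReal.ofReal T)⁻¹ • (volume : Measure (AddCircle T)) := by
      rw [AddCircle.volume_eq_smul_haarAddCircle, smul_smul,
        ENNReal.inv_mul_cancel hne ENNReal.ofReal_ne_top, one_smul]
    rw [hhaa]
    exact hg_vol.smul_measure (ENNReal.inv_ne_top.mpr hne)
  -- Parseval
  set G : Lp ℂ 2 (@AddCircle.haarAddCircle T _) := hg_L2.toLp g with hGdef
  set H : Lp ℂ 2 (@AddCircle.haarAddCircle T _) := hh_L2.toLp hfun with hHdef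
  have hinner_bG : ∀ m : ℤ, inner ℂ (fourierBasis m) G = fourierCoeff g m := by
    intro m
    rw [← HilbertBasis.repr_apply_apply, fourierBasis_repr]
    refine integral_congr_ae ?_
    filter_upwards [hg_L2.coeFn_toLp] with z hz
    exact congrArg _ hz
  have hinner_Hb : ∀ m : ℤ, inner ℂ H (fourierBasis m) = fourierCoeff A (k - m) := by
    intro m
    rw [← inner_conj_symm, ← HilbertBasis.repr_apply_apply, fourierBasis_repr]
    have hHc : fourierCoeff (H : AddCircle T → ℂ) m = fourierCoeff hfun m := by
      refine integral_congr_ae ?_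
      filter_upwards [hh_L2.coeFn_toLp] with z hz
      exact congrArg _ hz
    rw [hHc, fourierCoeff, ← integral_conj, fourierCoeff]
    refine integral_congr_ae (Filter.Eventually.of_forall fun z => ?_)
    have e1 : (starRingEnd ℂ) (fourier (-m) z) = fourier m z := by
      rw [fourier_neg, Complex.conj_conj]
    have e2 : (starRingEnd ℂ) (fourier k z : ℂ) = fourier (-k) z := fourier_neg.symm
    have e3 : -(k - m) = m + -k := by ring
    rw [hfundef]
    simp only [smul_eq_mul, map_mul, e1, e2, Complex.conj_conj, e3, fourier_add]
    ring
  have hHG : inner ℂ H G = fourierCoeff (fun z => A z * g z) k := by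
    rw [MeasureTheory.L2.inner_def, fourierCoeff]
    refine integral_congr_ae ?_
    filter_upwards [hh_L2.coeFn_toLp, hg_L2.coeFn_toLp] with z h1 h2
    rw [RCLike.inner_apply, h1, h2, hfundef]
    simp only [smul_eq_mul, map_mul, Complex.conj_conj, ← fourier_neg]
    ring
  have step1 : phasor T (fun τ => a τ * x τ) k t = phasor T (fun τ => a τ * x' τ) k t :=
    hpcongr k _ _ (hxx'.mono fun τ h => by simp only [h])
  have step2 : phasor T (fun τ => a τ * x' τ) k t = fourierCoeff (fun z => A z * g z) k :=
    hphasor k _ _ (fun τ hτ => by rw [hA_mk τ, hg_mk τ hτ])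
  have step3 : ∀ m : ℤ, phasor T x m t = fourierCoeff g m :=
    fun m => (hpcongr m x x' hxx').trans (hphasor m x' g hg_mk)
  rw [step1, step2, ← hHG, ← (fourierBasis.hasSum_inner_mul_inner H G).tsum_eq]
  exact tsum_congr fun m => by
    rw [hinner_Hb m, hinner_bG m, ← hacoef (k - m), ← step3 m]
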